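/- For constants D > 0, W > 0, γ > 0, the function f(τ) = (τ/γ)·(2^(D/(W·τ)) − 1) tends to D·ln 2/(W·γ) as τ → ∞ and tends to +∞ as τ → 0⁺. Consequently, for every τ₀ > D·ln 2/(W·γ) there exists a unique τ > 0 with f(τ) = τ₀. -/

import Mathlib

open Filter Topology

section aux

variable {c : ℝ}

/-- slope of `exp (c x)` from 0: tends to `c` as `x → 0` (within `≠ 0`). -/
lemma aux_slope_tendsto (c : ℝ) :
    Tendsto (fun x : ℝ => (Real.exp (c * x) - 1) / x) (𝓝[≠] (0:ℝ)) (𝓝 c) := by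
  have h : HasDerivAt (fun x : ℝ => Real.exp (c * x)) c 0 := by
    have := (Real.hasDerivAt_exp (c * 0)).comp 0 ((hasDerivAt_id (0:ℝ)).const_mul c)
    simpa [Function.comp_def] using this
  have := hasDerivAt_iff_tendsto_slope.mp h
  refine this.congr' ?_
  filter_upwards [self_mem_nhdsWithin] with x hx
  simp only [slope_def_field, mul_zero, Real.exp_zero, sub_zero]

/-- `(exp (c x) - 1)/x → ∞` as `x → ∞`, for `c > 0`. -/
lemma aux_g_atTop (hc : 0 < c) :
    Tendsto (fun x : ℝ => (Real.exp (c * x) - 1) / x) atTop atTop := by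
  have hlow : Tendsto (fun x : ℝ => c + c ^ 2 * x / 2) atTop atTop := by
    apply tendsto_atTop_add_const_left
    exact (tendsto_id.const_mul_atTop (by positivity)).atTop_div_const two_pos
  refine tendsto_atTop_mono' _ ?_ hlow
  filter_upwards [eventually_gt_atTop (0:ℝ)] with x hx
  have hq := Real.quadratic_le_exp_of_nonneg (mul_nonneg hc.le hx.le)
  rw [le_div_iff₀ hx]
  nlinarith [sq_nonneg (c*x)]

/-- strict monotonicity of `(exp (c x) - 1)/x` on positives, for `c > 0`. -/
lemma aux_g_strictMono (hc : 0 < c) {u v : ℝ} (hu : 0 < u) (huv : u < v) :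
    (Real.exp (c * u) - 1) / u < (Real.exp (c * v) - 1) / v := by
  have hv : 0 < v := hu.trans huv
  have hcu : (0:ℝ) < c * u := mul_pos hc hu
  have hcv : (0:ℝ) < c * v := mul_pos hc hv
  have key := strictConvexOn_exp.secant_strict_mono (a := 0) (x := c * u) (y := c * v)
    (Set.mem_univ _) (Set.mem_univ _) (Set.mem_univ _) hcu.ne' hcv.ne'
    (by nlinarith)
  simp only [Real.exp_zero, sub_zero] at key
  have h1 : (Real.exp (c * u) - 1) / u = (Real.exp (c * u) - 1) / (c * u) * c := by
    field_simp
  have h2 : (Real.exp (c * v) - 1) / v = (Real.exp (c * v) - 1) / (c * v) * c := by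
    field_simp
  rw [h1, h2]
  exact mul_lt_mul_of_pos_right key hc

end aux

/-- `f(τ) = (τ/γ)(2^(D/(Wτ)) − 1)` tends to `D ln 2/(Wγ)` as `τ → ∞`, tends to `+∞`
as `τ → 0⁺`, and consequently for every `τ₀ > D ln 2/(Wγ)` there is a unique `τ > 0`
with `f(τ) = τ₀`. -/
theorem stmt_1 (D W γ : ℝ) (hD : 0 < D) (hW : 0 < W) (hγ : 0 < γ) :
    Tendsto (fun τ : ℝ => (τ / γ) * ((2 : ℝ) ^ (D / (W * τ)) - 1)) atTop
      (𝓝 (D * Real.log 2 / (W * γ))) ∧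
    Tendsto (fun τ : ℝ => (τ / γ) * ((2 : ℝ) ^ (D / (W * τ)) - 1)) (𝓝[>] 0) atTop ∧
    ∀ τ₀ : ℝ, D * Real.log 2 / (W * γ) < τ₀ →
      ∃! τ : ℝ, 0 < τ ∧ (τ / γ) * ((2 : ℝ) ^ (D / (W * τ)) - 1) = τ₀ := by
  set c := Real.log 2 with hc_def
  have hc : 0 < c := Real.log_pos one_lt_two
  have hrpow : ∀ τ : ℝ, (2:ℝ) ^ (D / (W * τ)) = Real.exp (c * (D / (W * τ))) := by
    intro τ; rw [Real.rpow_def_of_pos two_pos]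
  set F : ℝ → ℝ := fun τ => (τ / γ) * ((2 : ℝ) ^ (D / (W * τ)) - 1) with hF_def
  set g : ℝ → ℝ := fun x => (Real.exp (c * x) - 1) / x with hg_def
  set K : ℝ := D / (W * γ) with hK_def
  have hK : 0 < K := by positivity
  -- key rewriting: for τ > 0, F τ = K * g (D / (W * τ))
  have hFg : ∀ τ : ℝ, 0 < τ → F τ = K * g (D / (W * τ)) := by
    intro τ hτ
    have hWτ : W * τ ≠ 0 := (mul_pos hW hτ).ne'
    simp only [hF_def, hg_def, hK_def, hrpow]
    field_simp
  have hxpos : ∀ τ : ℝ, 0 < τ → 0 < D / (W * τ) := fun τ hτ => by positivity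
  -- strict anti-monotonicity of F on (0, ∞)
  have hanti : StrictAntiOn F (Set.Ioi 0) := by
    intro τ₁ hτ₁ τ₂ hτ₂ h12
    rw [hFg _ hτ₁, hFg _ hτ₂]
    apply mul_lt_mul_of_pos_left _ hK
    apply aux_g_strictMono hc (hxpos _ hτ₂)
    exact div_lt_div_of_pos_left hD (mul_pos hW hτ₁) (mul_lt_mul_of_pos_left h12 hW)
  -- Part 1: limit at infinity
  have hx_atTop : Tendsto (fun τ : ℝ => D / (W * τ)) atTop (𝓝[>] 0) := by
    rw [tendsto_nhdsWithin_iff]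
    constructor
    · have h := ((tendsto_id.const_mul_atTop hW).inv_tendsto_atTop).const_mul D
      rw [mul_zero] at h
      exact h.congr fun τ => (div_eq_mul_inv D _).symm
    · filter_upwards [eventually_gt_atTop (0:ℝ)] with τ hτ using hxpos τ hτ
  have h1 : Tendsto F atTop (𝓝 (D * c / (W * γ))) := by
    have hg0 : Tendsto g (𝓝[≠] (0:ℝ)) (𝓝 c) := aux_slope_tendsto c
    have hcomp : Tendsto (fun τ : ℝ => K * g (D / (W * τ))) atTop (𝓝 (K * c)) :=
      ((hg0.comp (hx_atTop.mono_right (nhdsWithin_mono _ (by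
        intro x hx
        exact ne_of_gt hx)))).const_mul K)
    have : K * c = D * c / (W * γ) := by rw [hK_def]; ring
    rw [← this]
    refine hcomp.congr' ?_
    filter_upwards [eventually_gt_atTop (0:ℝ)] with τ hτ using (hFg τ hτ).symm
  -- Part 2: limit at 0⁺
  have hx_at0 : Tendsto (fun τ : ℝ => D / (W * τ)) (𝓝[>] 0) atTop := by
    have h1' : Tendsto (fun τ : ℝ => W * τ) (𝓝[>] (0:ℝ)) (𝓝[>] 0) := by
      rw [tendsto_nhdsWithin_iff]
      constructor
      · apply Tendsto.mono_left _ nhdsWithin_le_nhds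
        simpa using (continuous_mul_left W).tendsto (0:ℝ)
      · filter_upwards [self_mem_nhdsWithin] with τ hτ
        exact mul_pos hW hτ
    have h2' : Tendsto (fun y : ℝ => D / y) (𝓝[>] (0:ℝ)) atTop :=
      Tendsto.const_mul_atTop hD (by simpa using tendsto_inv_nhdsGT_zero)
    exact h2'.comp h1'
  have h2 : Tendsto F (𝓝[>] 0) atTop := by
    have hcomp : Tendsto (fun τ : ℝ => K * g (D / (W * τ))) (𝓝[>] 0) atTop :=
      ((aux_g_atTop hc).comp hx_at0).const_mul_atTop hK
    refine hcomp.congr' ?_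
    filter_upwards [self_mem_nhdsWithin] with τ hτ using (hFg τ hτ).symm
  refine ⟨h1, h2, ?_⟩
  -- Part 3: existence and uniqueness
  intro τ₀ hτ₀
  -- continuity of F on (0, ∞)
  have hFeq : F = fun τ => (τ / γ) * (Real.exp (c * (D / (W * τ))) - 1) := by
    funext τ; simp only [hF_def, hrpow]
  have hcont : ContinuousOn F (Set.Ioi 0) := by
    rw [hFeq]
    intro τ hτ
    have hWτ : W * τ ≠ 0 := by
      have : (0:ℝ) < τ := hτ
      positivity
    apply ContinuousAt.continuousWithinAt
    apply ContinuousAt.mul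
    · exact continuousAt_id.div_const γ
    · apply ContinuousAt.sub _ continuousAt_const
      have hd : ContinuousAt (fun τ : ℝ => D / (W * τ)) τ :=
        continuousAt_const.div ((continuous_const.mul continuous_id).continuousAt) hWτ
      exact Real.continuous_exp.continuousAt.comp (continuousAt_const.mul hd)
  -- pick a with F a > τ₀
  obtain ⟨a, ha0, haF⟩ : ∃ a : ℝ, 0 < a ∧ τ₀ < F a := by
    have := (h2.eventually_gt_atTop τ₀).and self_mem_nhdsWithin
    obtain ⟨a, h₁, h₂⟩ := this.exists
    exact ⟨a, h₂, h₁⟩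
  -- pick b ≥ a with F b < τ₀
  obtain ⟨b, hab, hbF⟩ : ∃ b : ℝ, a ≤ b ∧ F b < τ₀ := by
    have hev : ∀ᶠ τ in atTop, F τ < τ₀ := h1.eventually (gt_mem_nhds hτ₀)
    obtain ⟨b, h₁, h₂⟩ := ((eventually_ge_atTop a).and hev).exists
    exact ⟨b, h₁, h₂⟩
  have hsub : Set.Icc a b ⊆ Set.Ioi 0 := fun x hx => lt_of_lt_of_le ha0 hx.1
  have hIVT := intermediate_value_Icc' hab (hcont.mono hsub)
  obtain ⟨τ, hτmem, hτeq⟩ := hIVT ⟨hbF.le, haF.le⟩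
  have hτpos : 0 < τ := hsub hτmem
  refine ⟨τ, ⟨hτpos, hτeq⟩, ?_⟩
  rintro τ' ⟨hτ'pos, hτ'eq⟩
  exact hanti.injOn hτ'pos hτpos (by rw [show F τ' = τ₀ from hτ'eq, show F τ = τ₀ from hτeq])
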